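/- Let 1 < p < ∞, let f : [a,b] → ℝ be Hölder continuous of order r ∈ (0,1] with constant H, and let u : [a,b] → ℝ be Lipschitz with constant L. Then for all a ≤ t₀ ≤ x ≤ t₁ ≤ b, |∫ₐᵇ f du − [u(x) − u(a)]·f(t₀) − [u(b) − u(x)]·f(t₁)| ≤ H·L·[ (x−a)^{1−1/p} · ( ((t₀−a)^{rp+1} + (x−t₀)^{rp+1}) / (rp+1) )^{1/p} + (b−x)^{1−1/p} · ( ((t₁−x)^{rp+1} + (b−t₁)^{rp+1}) / (rp+1) )^{1/p} ]. -/

import Mathlib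

/-- A tagged partition of the interval `[a, b]`. -/
structure TaggedPartition (a b : ℝ) where
  n : ℕ
  pts : ℕ → ℝ
  tag : ℕ → ℝ
  mono : ∀ i, pts i ≤ pts (i + 1)
  first : pts 0 = a
  last : pts n = b
  tag_mem : ∀ i, pts i ≤ tag i ∧ tag i ≤ pts (i + 1)

/-- The Riemann–Stieltjes sum of `f` with respect to `u` over a tagged partition. -/
def RSsum (f u : ℝ → ℝ) {a b : ℝ} (P : TaggedPartition a b) : ℝ :=
  ∑ i ∈ Finset.range P.n, f (P.tag i) * (u (P.pts (i + 1)) - u (P.pts i))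

/-- `IsRSIntegral f u a b I` means the Riemann–Stieltjes integral `∫ₐᵇ f du` exists
and equals `I`: Riemann–Stieltjes sums converge to `I` as the mesh tends to `0`. -/
def IsRSIntegral (f u : ℝ → ℝ) (a b I : ℝ) : Prop :=
  ∀ ε > 0, ∃ δ > 0, ∀ P : TaggedPartition a b,
    (∀ i < P.n, P.pts (i + 1) - P.pts i < δ) → |RSsum f u P - I| < ε

/-- The total (Jordan) variation of `u` on `[a, b]`. -/
noncomputable def totalVar (u : ℝ → ℝ) (a b : ℝ) : ℝ :=
  (eVariationOn u (Set.Icc a b)).toReal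

open intervalIntegral in
lemma int_abs_rpow (e : ℝ) (he : 0 < e) {c t d : ℝ} (hct : c ≤ t) (htd : t ≤ d) :
    ∫ τ in c..d, |τ - t| ^ e = ((t - c) ^ (e + 1) + (d - t) ^ (e + 1)) / (e + 1) := by
  have hcont : Continuous (fun τ : ℝ => |τ - t| ^ e) :=
    ((continuous_id.sub continuous_const).abs).rpow_const (fun x => Or.inr he.le)
  have h1 : IntervalIntegrable (fun τ : ℝ => |τ - t| ^ e) MeasureTheory.volume c t :=
    hcont.intervalIntegrable _ _
  have h2 : IntervalIntegrable (fun τ : ℝ => |τ - t| ^ e) MeasureTheory.volume t d :=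
    hcont.intervalIntegrable _ _
  have he1 : e + 1 ≠ 0 := by positivity
  rw [← integral_add_adjacent_intervals h1 h2]
  have e1 : ∫ τ in c..t, |τ - t| ^ e = (t - c) ^ (e + 1) / (e + 1) := by
    rw [show (∫ τ in c..t, |τ - t| ^ e) = ∫ τ in c..t, (t - τ) ^ e from
      integral_congr (fun τ hτ => by
        rw [Set.uIcc_of_le hct] at hτ
        rw [abs_sub_comm, abs_of_nonneg (by linarith [hτ.2])]),
      integral_comp_sub_left (fun y => y ^ e) t, sub_self,
      integral_rpow (Or.inl (by linarith)), Real.zero_rpow he1, sub_zero]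
  have e2 : ∫ τ in t..d, |τ - t| ^ e = (d - t) ^ (e + 1) / (e + 1) := by
    rw [show (∫ τ in t..d, |τ - t| ^ e) = ∫ τ in t..d, (τ - t) ^ e from
      integral_congr (fun τ hτ => by
        rw [Set.uIcc_of_le htd] at hτ
        rw [abs_of_nonneg (by linarith [hτ.1])]),
      integral_comp_sub_right (fun y => y ^ e) t, sub_self,
      integral_rpow (Or.inl (by linarith)), Real.zero_rpow he1, sub_zero]
  rw [e1, e2]
  ring

lemma exists_tag (e : ℝ) (he : 0 < e) (t c d : ℝ) (hcd : c ≤ d) :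
    ∃ ξ, c ≤ ξ ∧ ξ ≤ d ∧ |ξ - t| ^ e * (d - c) = ∫ τ in c..d, |τ - t| ^ e := by
  have hcont : Continuous (fun τ : ℝ => |τ - t| ^ e) :=
    ((continuous_id.sub continuous_const).abs).rpow_const (fun x => Or.inr he.le)
  rcases eq_or_lt_of_le hcd with h | h
  · exact ⟨c, le_refl c, hcd, by rw [← h, sub_self, mul_zero, intervalIntegral.integral_same]⟩
  · set F : ℝ → ℝ := fun u => ∫ τ in c..u, |τ - t| ^ e with hF
    have hderiv : ∀ u : ℝ, HasDerivAt F (|u - t| ^ e) u := fun u =>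
      (hcont.integral_hasStrictDerivAt c u).hasDerivAt
    obtain ⟨ξ, hξ, heq⟩ := exists_hasDerivAt_eq_slope F (fun u => |u - t| ^ e) h
      (fun x _ => (hderiv x).continuousAt.continuousWithinAt) (fun x _ => hderiv x)
    refine ⟨ξ, hξ.1.le, hξ.2.le, ?_⟩
    have : F c = 0 := intervalIntegral.integral_same
    rw [heq, this, sub_zero, div_mul_cancel₀ _ (sub_ne_zero.mpr h.ne')]

lemma side_bound (r p : ℝ) (hr : 0 < r) (hp : 1 < p) (c t d : ℝ) (hct : c ≤ t) (htd : t ≤ d)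
    (n : ℕ) (hn : 0 < n) :
    ∃ ξ : ℕ → ℝ, (∀ i : ℕ, c + (i : ℝ) * ((d - c) / n) ≤ ξ i ∧
        ξ i ≤ c + ((i : ℝ) + 1) * ((d - c) / n)) ∧
      ∑ i ∈ Finset.range n, |ξ i - t| ^ r * ((d - c) / n) ≤
        (d - c) ^ (1 - 1 / p) *
          (((t - c) ^ (r * p + 1) + (d - t) ^ (r * p + 1)) / (r * p + 1)) ^ (1 / p) := by
  have hcd : c ≤ d := hct.trans htd
  have hn0 : (n : ℝ) ≠ 0 := Nat.cast_ne_zero.mpr hn.ne'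
  set Δ : ℝ := (d - c) / n with hΔdef
  have hΔ : 0 ≤ Δ := div_nonneg (by linarith) (Nat.cast_nonneg n)
  set g : ℕ → ℝ := fun i => c + (i : ℝ) * Δ with hgdef
  have hgΔ : ∀ i : ℕ, g (i + 1) - g i = Δ := by intro i; simp [hgdef]; push_cast; ring
  have hgmono : ∀ i : ℕ, g i ≤ g (i + 1) := fun i => by
    have := hgΔ i; linarith
  set e : ℝ := r * p with hedef
  have he : 0 < e := mul_pos hr (by linarith)
  have hcont : Continuous (fun τ : ℝ => |τ - t| ^ e) :=
    ((continuous_id.sub continuous_const).abs).rpow_const (fun x => Or.inr he.le)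
  have key : ∀ i : ℕ, ∃ ξ, g i ≤ ξ ∧ ξ ≤ g (i + 1) ∧
      |ξ - t| ^ e * Δ = ∫ τ in g i..g (i + 1), |τ - t| ^ e := by
    intro i
    obtain ⟨ξ, h1, h2, h3⟩ := exists_tag e he t (g i) (g (i + 1)) (hgmono i)
    exact ⟨ξ, h1, h2, by rwa [hgΔ i] at h3⟩
  choose ξ hξ1 hξ2 hξ3 using key
  refine ⟨ξ, fun i => ⟨hξ1 i, by simpa [hgdef, add_mul] using hξ2 i⟩, ?_⟩
  -- conjugate exponent
  set q : ℝ := p / (p - 1) with hqdef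
  have hp0 : p ≠ 0 := by positivity
  have hp1 : p - 1 ≠ 0 := by intro h; rw [sub_eq_zero] at h; exact (lt_irrefl 1 (h ▸ hp))
  have hpq : q.HolderConjugate p := by
    exact ((Real.holderConjugate_iff_eq_conjExponent hp).mpr hqdef).symm
  have hq0 : q ≠ 0 := hpq.ne_zero
  have hsum1 : 1 / q + 1 / p = 1 := by
    simpa [one_div] using hpq.inv_add_inv_eq_one
  have hq1 : 1 / q = 1 - 1 / p := by linarith
  -- rewrite each term
  have hterm : ∀ i ∈ Finset.range n,
      |ξ i - t| ^ r * Δ = (Δ ^ (1 / q)) * (|ξ i - t| ^ r * Δ ^ (1 / p)) := by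
    intro i _
    have : Δ ^ (1 / q) * Δ ^ (1 / p) = Δ := by
      rw [← Real.rpow_add' hΔ (by rw [hsum1]; norm_num), hsum1, Real.rpow_one]
    rw [mul_comm (Δ ^ (1 / q)), mul_assoc, mul_comm (Δ ^ (1 / p)), this]
  rw [Finset.sum_congr rfl hterm]
  have holder := Real.inner_le_Lp_mul_Lq (Finset.range n)
    (fun _ => Δ ^ (1 / q)) (fun i => |ξ i - t| ^ r * Δ ^ (1 / p)) hpq
  refine holder.trans ?_
  have fac1 : (∑ _i ∈ Finset.range n, |Δ ^ (1 / q)| ^ q) ^ (1 / q) = (d - c) ^ (1 - 1 / p) := by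
    have habs : |Δ ^ (1 / q)| = Δ ^ (1 / q) := abs_of_nonneg (Real.rpow_nonneg hΔ _)
    have hpow : (Δ ^ (1 / q)) ^ q = Δ := by
      rw [← Real.rpow_mul hΔ, one_div_mul_cancel hq0, Real.rpow_one]
    rw [Finset.sum_congr rfl (fun i _ => by rw [habs, hpow]), Finset.sum_const,
      Finset.card_range, nsmul_eq_mul, hΔdef, mul_div_cancel₀ _ hn0, hq1]
  have fac2 : (∑ i ∈ Finset.range n, |(|ξ i - t| ^ r * Δ ^ (1 / p))| ^ p) ^ (1 / p) =
      (((t - c) ^ (r * p + 1) + (d - t) ^ (r * p + 1)) / (r * p + 1)) ^ (1 / p) := by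
    have hterm2 : ∀ i ∈ Finset.range n,
        |(|ξ i - t| ^ r * Δ ^ (1 / p))| ^ p = ∫ τ in g i..g (i + 1), |τ - t| ^ e := by
      intro i _
      have hnn : (0:ℝ) ≤ |ξ i - t| ^ r * Δ ^ (1 / p) :=
        mul_nonneg (Real.rpow_nonneg (abs_nonneg _) _) (Real.rpow_nonneg hΔ _)
      rw [abs_of_nonneg hnn, Real.mul_rpow (Real.rpow_nonneg (abs_nonneg _) _)
        (Real.rpow_nonneg hΔ _), ← Real.rpow_mul (abs_nonneg _), ← Real.rpow_mul hΔ,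
        one_div_mul_cancel hp0, Real.rpow_one]
      exact hξ3 i
    rw [Finset.sum_congr rfl hterm2,
      intervalIntegral.sum_integral_adjacent_intervals
        (fun k _ => hcont.intervalIntegrable _ _)]
    have hg0 : g 0 = c := by simp [hgdef]
    have hgn : g n = d := by
      simp only [hgdef, hΔdef]
      field_simp
      ring
    rw [hg0, hgn, int_abs_rpow e he hct htd]
  rw [fac1, fac2]
set_option maxHeartbeats 2000000 in
theorem two_point_quadrature_Lp_lipschitz
    (a b H L r p t0 x t1 I : ℝ) (f u : ℝ → ℝ)
    (hp : 1 < p) (hr : 0 < r) (hr1 : r ≤ 1) (hH : 0 ≤ H) (hL : 0 ≤ L)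
    (hf : ∀ s ∈ Set.Icc a b, ∀ t ∈ Set.Icc a b, |f s - f t| ≤ H * |s - t| ^ r)
    (hu : ∀ s ∈ Set.Icc a b, ∀ t ∈ Set.Icc a b, |u s - u t| ≤ L * |s - t|)
    (ht0 : a ≤ t0) (ht0x : t0 ≤ x) (hxt1 : x ≤ t1) (ht1 : t1 ≤ b)
    (hI : IsRSIntegral f u a b I) :
    |I - (u x - u a) * f t0 - (u b - u x) * f t1| ≤
      H * L * ((x - a) ^ (1 - 1 / p) *
          (((t0 - a) ^ (r * p + 1) + (x - t0) ^ (r * p + 1)) / (r * p + 1)) ^ (1 / p) +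
        (b - x) ^ (1 - 1 / p) *
          (((t1 - x) ^ (r * p + 1) + (b - t1) ^ (r * p + 1)) / (r * p + 1)) ^ (1 / p)) := by
  have hax : a ≤ x := ht0.trans ht0x
  have hxb : x ≤ b := hxt1.trans ht1
  have hab : a ≤ b := hax.trans hxb
  have ht0ab : t0 ∈ Set.Icc a b := ⟨ht0, ht0x.trans hxb⟩
  have ht1ab : t1 ∈ Set.Icc a b := ⟨hax.trans hxt1, ht1⟩
  refine le_of_forall_pos_le_add (fun ε hε => ?_)
  obtain ⟨δ, hδ, hP⟩ := hI ε hε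
  -- choose n
  obtain ⟨m, hm⟩ := exists_nat_gt (max ((x - a) / δ) ((b - x) / δ))
  set n : ℕ := max m 1 with hndef
  have hn : 0 < n := le_max_right m 1
  have hn0 : (n : ℝ) ≠ 0 := Nat.cast_ne_zero.mpr hn.ne'
  have hnpos : (0:ℝ) < n := by positivity
  have hmn : (m : ℝ) ≤ n := Nat.cast_le.mpr (le_max_left m 1)
  have hd1 : (x - a) / n < δ := by
    rw [div_lt_iff₀ hnpos]
    have h1 : (x - a) / δ < n := lt_of_lt_of_le (lt_of_le_of_lt (le_max_left _ _) hm) hmn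
    have h3 := mul_lt_mul_of_pos_right h1 hδ
    have h4 : (x - a) / δ * δ = x - a := by field_simp
    linarith [mul_comm δ (n : ℝ)]
  have hd2 : (b - x) / n < δ := by
    rw [div_lt_iff₀ hnpos]
    have h1 : (b - x) / δ < n := lt_of_lt_of_le (lt_of_le_of_lt (le_max_right _ _) hm) hmn
    have h3 := mul_lt_mul_of_pos_right h1 hδ
    have h4 : (b - x) / δ * δ = b - x := by field_simp
    linarith [mul_comm δ (n : ℝ)]
  set Δ₁ : ℝ := (x - a) / n with hΔ₁def
  set Δ₂ : ℝ := (b - x) / n with hΔ₂def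
  have hΔ₁ : 0 ≤ Δ₁ := div_nonneg (by linarith) hnpos.le
  have hΔ₂ : 0 ≤ Δ₂ := div_nonneg (by linarith) hnpos.le
  have hnx : a + (n : ℝ) * Δ₁ = x := by rw [hΔ₁def]; field_simp; ring
  have hnb : x + (n : ℝ) * Δ₂ = b := by rw [hΔ₂def]; field_simp; ring
  obtain ⟨ξ₁, hξ₁mem, hξ₁sum⟩ := side_bound r p hr hp a t0 x ht0 ht0x n hn
  obtain ⟨ξ₂, hξ₂mem, hξ₂sum⟩ := side_bound r p hr hp x t1 b hxt1 ht1 n hn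
  rw [← hΔ₁def] at hξ₁sum hξ₁mem
  rw [← hΔ₂def] at hξ₂sum hξ₂mem
  -- the partition points and tags
  set pts : ℕ → ℝ := fun i => if i ≤ n then a + (i : ℝ) * Δ₁
    else min (x + ((i - n : ℕ) : ℝ) * Δ₂) b with hptsdef
  set tag : ℕ → ℝ := fun i => if i < n then ξ₁ i
    else if i < n + n then ξ₂ (i - n) else b with htagdef
  have hpts_le : ∀ i, i ≤ n → pts i = a + (i : ℝ) * Δ₁ := fun i hi => if_pos hi
  have hpts_mid : ∀ i, n ≤ i → i ≤ n + n → pts i = x + ((i - n : ℕ) : ℝ) * Δ₂ := by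
    intro i hi hi2
    rcases eq_or_lt_of_le hi with h | h
    · rw [hpts_le i h.symm.le, ← h, hnx]
      simp
    · rw [hptsdef]
      simp only [if_neg (not_le.mpr h)]
      apply min_eq_left
      have hk : (i - n : ℕ) ≤ n := by omega
      have h2 : ((i - n : ℕ) : ℝ) * Δ₂ ≤ (n : ℝ) * Δ₂ :=
        mul_le_mul_of_nonneg_right (by exact_mod_cast hk) hΔ₂
      linarith [hnb]
  have hpts_top : ∀ i, n + n ≤ i → pts i = b := by
    intro i hi
    rw [hptsdef]
    simp only
    rw [if_neg (by omega)]
    apply min_eq_right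
    have hk : n ≤ (i - n : ℕ) := by omega
    have h2 : (n : ℝ) * Δ₂ ≤ ((i - n : ℕ) : ℝ) * Δ₂ :=
      mul_le_mul_of_nonneg_right (by exact_mod_cast hk) hΔ₂
    linarith [hnb]
  have hcast : ∀ i, n ≤ i → ((i + 1 - n : ℕ) : ℝ) = ((i - n : ℕ) : ℝ) + 1 := by
    intro i hi
    have h : i + 1 - n = (i - n) + 1 := by omega
    rw [h]
    push_cast
    ring
  have hmono : ∀ i, pts i ≤ pts (i + 1) := by
    intro i
    rcases le_or_gt (i + 1) n with h | h
    · rw [hpts_le i (by omega), hpts_le (i + 1) h]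
      push_cast
      nlinarith [hΔ₁]
    · have hni : n ≤ i := by omega
      rcases le_or_gt (i + 1) (n + n) with h2 | h2
      · rw [hpts_mid i hni (by omega), hpts_mid (i + 1) (by omega) h2, hcast i hni]
        nlinarith [hΔ₂]
      · rcases le_or_gt (n + n) i with h3 | h3
        · rw [hpts_top i h3, hpts_top (i + 1) (by omega)]
        · rw [hpts_mid i hni (by omega), hpts_top (i + 1) (by omega)]
          have hk : (i - n : ℕ) ≤ n := by omega
          have h4 : ((i - n : ℕ) : ℝ) * Δ₂ ≤ (n : ℝ) * Δ₂ :=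
            mul_le_mul_of_nonneg_right (by exact_mod_cast hk) hΔ₂
          linarith [hnb]
  have htag_mem : ∀ i, pts i ≤ tag i ∧ tag i ≤ pts (i + 1) := by
    intro i
    rcases lt_or_ge i n with h | h
    · rw [htagdef]
      simp only [if_pos h]
      rw [hpts_le i h.le, hpts_le (i + 1) (by omega)]
      refine ⟨(hξ₁mem i).1, ?_⟩
      have h2 := (hξ₁mem i).2
      push_cast
      linarith
    · rcases lt_or_ge i (n + n) with h2 | h2
      · rw [htagdef]
        simp only [if_neg (not_lt.mpr h), if_pos h2]
        rw [hpts_mid i h (by omega), hpts_mid (i + 1) (by omega) (by omega), hcast i h]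
        exact ⟨(hξ₂mem (i - n)).1, (hξ₂mem (i - n)).2⟩
      · rw [htagdef]
        simp only [if_neg (not_lt.mpr h), if_neg (not_lt.mpr h2)]
        rw [hpts_top i h2, hpts_top (i + 1) (by omega)]
        exact ⟨le_refl b, le_refl b⟩
  set P : TaggedPartition a b :=
    ⟨n + n, pts, tag, hmono, by rw [hpts_le 0 (by omega)]; simp,
      hpts_top (n + n) le_rfl, htag_mem⟩ with hPdef
  have hΔp1 : ∀ i, i < n → pts (i + 1) - pts i = Δ₁ := by
    intro i hi
    rw [hpts_le i (by omega), hpts_le (i + 1) (by omega)]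
    push_cast
    ring
  have hΔp2 : ∀ i, n ≤ i → i < n + n → pts (i + 1) - pts i = Δ₂ := by
    intro i hi hi2
    rw [hpts_mid i hi (by omega), hpts_mid (i + 1) (by omega) (by omega), hcast i hi]
    ring
  have hmesh : ∀ i, i < P.n → P.pts (i + 1) - P.pts i < δ := by
    intro i hi
    show pts (i + 1) - pts i < δ
    rcases lt_or_ge i n with h | h
    · rw [hΔp1 i h]; exact hd1
    · rw [hΔp2 i h hi]; exact hd2
  have hclose := hP P hmesh
  -- membership of points and tags in [a, b]
  have hpts_ab : ∀ i, pts i ∈ Set.Icc a b := by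
    intro i
    rcases le_or_gt i n with h | h
    · rw [hpts_le i h]
      constructor
      · nlinarith [Nat.cast_nonneg (α := ℝ) i, hΔ₁]
      · have h2 : ((i : ℕ) : ℝ) * Δ₁ ≤ (n : ℝ) * Δ₁ :=
          mul_le_mul_of_nonneg_right (by exact_mod_cast h) hΔ₁
        linarith [hnx]
    · rw [hptsdef]
      simp only [if_neg (not_le.mpr h)]
      constructor
      · refine le_min ?_ hab
        nlinarith [Nat.cast_nonneg (α := ℝ) (i - n), hΔ₂]
      · exact min_le_right _ _
  have htag_ab : ∀ i, tag i ∈ Set.Icc a b := fun i =>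
    ⟨(hpts_ab i).1.trans (htag_mem i).1, (htag_mem i).2.trans (hpts_ab (i + 1)).2⟩
  -- bounds on individual terms
  have hterm1 : ∀ i ∈ Finset.range n,
      |(f (tag i) - f t0) * (u (pts (i + 1)) - u (pts i))| ≤
        H * L * (|ξ₁ i - t0| ^ r * Δ₁) := by
    intro i hi
    rw [Finset.mem_range] at hi
    have htagi : tag i = ξ₁ i := if_pos hi
    rw [abs_mul]
    have h1 : |f (tag i) - f t0| ≤ H * |tag i - t0| ^ r := hf _ (htag_ab i) t0 ht0ab
    have h2 : |u (pts (i + 1)) - u (pts i)| ≤ L * Δ₁ := by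
      have h3 := hu (pts (i + 1)) (hpts_ab _) (pts i) (hpts_ab _)
      rwa [abs_of_nonneg (sub_nonneg.mpr (hmono i)), hΔp1 i hi] at h3
    calc |f (tag i) - f t0| * |u (pts (i + 1)) - u (pts i)|
        ≤ (H * |tag i - t0| ^ r) * (L * Δ₁) := by
          apply mul_le_mul h1 h2 (abs_nonneg _)
          positivity
    _ = H * L * (|ξ₁ i - t0| ^ r * Δ₁) := by rw [htagi]; ring
  have hterm2 : ∀ i ∈ Finset.range n,
      |(f (tag (n + i)) - f t1) * (u (pts (n + i + 1)) - u (pts (n + i)))| ≤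
        H * L * (|ξ₂ i - t1| ^ r * Δ₂) := by
    intro i hi
    rw [Finset.mem_range] at hi
    have htagi : tag (n + i) = ξ₂ i := by
      rw [htagdef]
      simp only [if_neg (by omega : ¬ n + i < n), if_pos (by omega : n + i < n + n)]
      congr 1
      omega
    rw [abs_mul]
    have h1 : |f (tag (n + i)) - f t1| ≤ H * |tag (n + i) - t1| ^ r :=
      hf _ (htag_ab _) t1 ht1ab
    have h2 : |u (pts (n + i + 1)) - u (pts (n + i))| ≤ L * Δ₂ := by
      have h3 := hu (pts (n + i + 1)) (hpts_ab _) (pts (n + i)) (hpts_ab _)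
      rwa [abs_of_nonneg (sub_nonneg.mpr (hmono _)), hΔp2 (n + i) (by omega) (by omega)] at h3
    calc |f (tag (n + i)) - f t1| * |u (pts (n + i + 1)) - u (pts (n + i))|
        ≤ (H * |tag (n + i) - t1| ^ r) * (L * Δ₂) := by
          apply mul_le_mul h1 h2 (abs_nonneg _)
          positivity
    _ = H * L * (|ξ₂ i - t1| ^ r * Δ₂) := by rw [htagi]; ring
  -- telescoping sums
  have htel1 : ∑ i ∈ Finset.range n, (u (pts (i + 1)) - u (pts i)) = u x - u a := by
    rw [Finset.sum_range_sub (fun i => u (pts i)) n]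
    rw [hpts_le n le_rfl, hnx, hpts_le 0 (by omega)]
    simp
  have htel2 : ∑ i ∈ Finset.range n, (u (pts (n + i + 1)) - u (pts (n + i))) = u b - u x := by
    have h := Finset.sum_range_sub (fun i => u (pts (n + i))) n
    simp only [Nat.add_zero] at h
    rw [show (∑ i ∈ Finset.range n, (u (pts (n + i + 1)) - u (pts (n + i)))) =
      ∑ i ∈ Finset.range n, (u (pts (n + (i + 1))) - u (pts (n + i))) from
      Finset.sum_congr rfl (fun i _ => by rw [Nat.add_assoc]), h,
      hpts_top (n + n) le_rfl, hpts_le n le_rfl, hnx]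
  -- splitting the Riemann–Stieltjes sum
  have hsplit : RSsum f u P - (u x - u a) * f t0 - (u b - u x) * f t1 =
      (∑ i ∈ Finset.range n, (f (tag i) - f t0) * (u (pts (i + 1)) - u (pts i))) +
      (∑ i ∈ Finset.range n,
        (f (tag (n + i)) - f t1) * (u (pts (n + i + 1)) - u (pts (n + i)))) := by
    have hR : RSsum f u P =
        (∑ i ∈ Finset.range n, f (tag i) * (u (pts (i + 1)) - u (pts i))) +
        (∑ i ∈ Finset.range n, f (tag (n + i)) * (u (pts (n + i + 1)) - u (pts (n + i)))) := by
      show (∑ i ∈ Finset.range (n + n), f (tag i) * (u (pts (i + 1)) - u (pts i))) = _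
      rw [Finset.sum_range_add]
    have e1 : ∑ i ∈ Finset.range n, (f (tag i) - f t0) * (u (pts (i + 1)) - u (pts i)) =
        (∑ i ∈ Finset.range n, f (tag i) * (u (pts (i + 1)) - u (pts i))) -
          f t0 * (u x - u a) := by
      simp only [sub_mul]
      rw [Finset.sum_sub_distrib, ← Finset.mul_sum, htel1]
    have e2 : ∑ i ∈ Finset.range n,
        (f (tag (n + i)) - f t1) * (u (pts (n + i + 1)) - u (pts (n + i))) =
        (∑ i ∈ Finset.range n, f (tag (n + i)) * (u (pts (n + i + 1)) - u (pts (n + i)))) -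
          f t1 * (u b - u x) := by
      simp only [sub_mul]
      rw [Finset.sum_sub_distrib, ← Finset.mul_sum, htel2]
    rw [hR, e1, e2]
    ring
  have hHL : 0 ≤ H * L := mul_nonneg hH hL
  have hbound1 : |∑ i ∈ Finset.range n, (f (tag i) - f t0) * (u (pts (i + 1)) - u (pts i))| ≤
      H * L * ((x - a) ^ (1 - 1 / p) *
        (((t0 - a) ^ (r * p + 1) + (x - t0) ^ (r * p + 1)) / (r * p + 1)) ^ (1 / p)) :=
    calc |∑ i ∈ Finset.range n, (f (tag i) - f t0) * (u (pts (i + 1)) - u (pts i))|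
        ≤ ∑ i ∈ Finset.range n, |(f (tag i) - f t0) * (u (pts (i + 1)) - u (pts i))| :=
          Finset.abs_sum_le_sum_abs _ _
    _ ≤ ∑ i ∈ Finset.range n, H * L * (|ξ₁ i - t0| ^ r * Δ₁) := Finset.sum_le_sum hterm1
    _ = H * L * ∑ i ∈ Finset.range n, |ξ₁ i - t0| ^ r * Δ₁ := by rw [Finset.mul_sum]
    _ ≤ _ := mul_le_mul_of_nonneg_left hξ₁sum hHL
  have hbound2 : |∑ i ∈ Finset.range n,
      (f (tag (n + i)) - f t1) * (u (pts (n + i + 1)) - u (pts (n + i)))| ≤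
      H * L * ((b - x) ^ (1 - 1 / p) *
        (((t1 - x) ^ (r * p + 1) + (b - t1) ^ (r * p + 1)) / (r * p + 1)) ^ (1 / p)) :=
    calc |∑ i ∈ Finset.range n,
        (f (tag (n + i)) - f t1) * (u (pts (n + i + 1)) - u (pts (n + i)))|
        ≤ ∑ i ∈ Finset.range n,
            |(f (tag (n + i)) - f t1) * (u (pts (n + i + 1)) - u (pts (n + i)))| :=
          Finset.abs_sum_le_sum_abs _ _
    _ ≤ ∑ i ∈ Finset.range n, H * L * (|ξ₂ i - t1| ^ r * Δ₂) := Finset.sum_le_sum hterm2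
    _ = H * L * ∑ i ∈ Finset.range n, |ξ₂ i - t1| ^ r * Δ₂ := by rw [Finset.mul_sum]
    _ ≤ _ := mul_le_mul_of_nonneg_left hξ₂sum hHL
  have habs : |I - (u x - u a) * f t0 - (u b - u x) * f t1| ≤
      |RSsum f u P - (u x - u a) * f t0 - (u b - u x) * f t1| + |RSsum f u P - I| := by
    have := abs_sub (RSsum f u P - (u x - u a) * f t0 - (u b - u x) * f t1) (RSsum f u P - I)
    calc |I - (u x - u a) * f t0 - (u b - u x) * f t1| =
        |(RSsum f u P - (u x - u a) * f t0 - (u b - u x) * f t1) - (RSsum f u P - I)| := by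
          ring_nf
    _ ≤ _ := abs_sub _ _
  calc |I - (u x - u a) * f t0 - (u b - u x) * f t1|
      ≤ |RSsum f u P - (u x - u a) * f t0 - (u b - u x) * f t1| + |RSsum f u P - I| := habs
  _ ≤ (H * L * ((x - a) ^ (1 - 1 / p) *
        (((t0 - a) ^ (r * p + 1) + (x - t0) ^ (r * p + 1)) / (r * p + 1)) ^ (1 / p)) +
      H * L * ((b - x) ^ (1 - 1 / p) *
        (((t1 - x) ^ (r * p + 1) + (b - t1) ^ (r * p + 1)) / (r * p + 1)) ^ (1 / p))) + ε := by
      apply add_le_add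
      · rw [hsplit]
        exact (abs_add_le _ _).trans (add_le_add hbound1 hbound2)
      · exact hclose.le
  _ = H * L * ((x - a) ^ (1 - 1 / p) *
        (((t0 - a) ^ (r * p + 1) + (x - t0) ^ (r * p + 1)) / (r * p + 1)) ^ (1 / p) +
      (b - x) ^ (1 - 1 / p) *
        (((t1 - x) ^ (r * p + 1) + (b - t1) ^ (r * p + 1)) / (r * p + 1)) ^ (1 / p)) + ε := by
      ring
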